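/- A 2×2 quaternion matrix M is invertible (is a unit in the ring M₂(ℍ)) if and only if ddet M ≠ 0, where ddet M := N₀₀N₁₁ − N₀₁N₁₀ with N = MM⁺ and M⁺ the conjugate transpose of M. -/

import Mathlib

open Matrix

/-- The double determinant of a 2×2 quaternion matrix. -/
noncomputable def ddet (M : Matrix (Fin 2) (Fin 2) (Quaternion ℝ)) : Quaternion ℝ :=
  (M * Mᴴ) 0 0 * (M * Mᴴ) 1 1 - (M * Mᴴ) 0 1 * (M * Mᴴ) 1 0

/-- In a finite-dimensional algebra, a one-sided inverse makes an element a unit. -/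
lemma isUnit_of_mul_eq_one_findim {A : Type*} [Ring A] [Algebra ℝ A]
    [FiniteDimensional ℝ A] {a b : A} (h : a * b = 1) : IsUnit a := by
  have h2 : LinearMap.mulLeft ℝ a * LinearMap.mulLeft ℝ b = 1 := by
    rw [Module.End.mul_eq_comp, ← LinearMap.mulLeft_mul, h, LinearMap.mulLeft_one,
      Module.End.one_eq_id]
  have h3 := mul_eq_one_comm.mp h2
  have hba : b * a = 1 := by
    have := congrArg (fun f => f (1 : A)) h3
    simpa using this
  exact ⟨⟨a, b, h, hba⟩, rfl⟩

/-- A 2×2 quaternion matrix is invertible if and only if its double determinant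
is nonzero. -/
theorem isUnit_iff_ddet_ne_zero (M : Matrix (Fin 2) (Fin 2) (Quaternion ℝ)) :
    IsUnit M ↔ ddet M ≠ 0 := by
  set n00 : ℝ := Quaternion.normSq (M 0 0) + Quaternion.normSq (M 0 1) with hn00
  set n11 : ℝ := Quaternion.normSq (M 1 0) + Quaternion.normSq (M 1 1) with hn11
  set q : Quaternion ℝ := M 0 0 * star (M 1 0) + M 0 1 * star (M 1 1) with hq
  set r : ℝ := n00 * n11 - Quaternion.normSq q with hr
  -- the Gram matrix
  have hN : M * Mᴴ = !![(n00 : Quaternion ℝ), q; star q, (n11 : Quaternion ℝ)] := by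
    refine Matrix.ext fun i j => ?_
    fin_cases i <;> fin_cases j <;>
      simp [Matrix.mul_apply, Fin.sum_univ_two, Matrix.conjTranspose_apply,
        Quaternion.self_mul_star, Quaternion.coe_add, StarMul.star_mul, star_add,
        hn00, hn11, hq]
  -- ddet is the real number r
  have key : ddet M = (r : Quaternion ℝ) := by
    rw [ddet, hN]
    show (n00 : Quaternion ℝ) * (n11 : Quaternion ℝ) - q * star q = (r : Quaternion ℝ)
    rw [Quaternion.self_mul_star, hr]
    push_cast
    rfl
  -- the adjugate-type matrix
  set A : Matrix (Fin 2) (Fin 2) (Quaternion ℝ) :=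
    !![(n11 : Quaternion ℝ), -q; -star q, (n00 : Quaternion ℝ)] with hA
  have hNA : M * Mᴴ * A = r • (1 : Matrix (Fin 2) (Fin 2) (Quaternion ℝ)) := by
    rw [hN, hA]
    refine Matrix.ext fun i j => ?_
    have h1 : (n00 : Quaternion ℝ) * n11 + -(q * star q) = (r : Quaternion ℝ) := by
      rw [Quaternion.self_mul_star]
      exact_mod_cast congrArg (Quaternion.coe (R := ℝ))
        (by rw [hr]; ring : n00 * n11 + -(Quaternion.normSq q) = r)
    have h2 : -((n00 : Quaternion ℝ) * q) + q * n00 = 0 := by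
      rw [Quaternion.coe_mul_eq_smul, Quaternion.mul_coe_eq_smul]; simp
    have h3 : star q * (n11 : Quaternion ℝ) + -((n11 : Quaternion ℝ) * star q) = 0 := by
      rw [Quaternion.coe_mul_eq_smul, Quaternion.mul_coe_eq_smul]; simp
    have h4 : -(star q * q) + (n11 : Quaternion ℝ) * n00 = (r : Quaternion ℝ) := by
      rw [Quaternion.star_mul_self]
      exact_mod_cast congrArg (Quaternion.coe (R := ℝ))
        (by rw [hr]; ring : -(Quaternion.normSq q) + n11 * n00 = r)
    have hco : ∀ x : ℝ, x • (1 : Quaternion ℝ) = (x : Quaternion ℝ) := by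
      intro x; rw [← Quaternion.coe_mul_eq_smul, mul_one]
    fin_cases i <;> fin_cases j <;>
      simp [Matrix.mul_apply, Fin.sum_univ_two, Matrix.smul_apply, Matrix.one_apply,
        hco, h1, h2, h3, h4]
  rw [key, ne_eq, show ((r : Quaternion ℝ) = 0 ↔ r = 0) from by
    rw [← Quaternion.coe_zero]; exact Quaternion.coe_inj]
  constructor
  · -- invertible → r ≠ 0
    intro hM hr0
    have hNunit : IsUnit (M * Mᴴ) := hM.mul (((Matrix.isUnit_conjTranspose M).mpr hM))
    have hA0 : A = 0 := by
      refine hNunit.mul_left_cancel ?_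
      rw [hNA, hr0, mul_zero, zero_smul]
    have h11 : n11 = 0 := by
      have := congrFun (congrFun hA0 0) 0
      rw [hA] at this
      have h2 : (n11 : Quaternion ℝ) = 0 := by simpa using this
      exact Quaternion.coe_injective (h2.trans Quaternion.coe_zero.symm)
    have h00 : n00 = 0 := by
      have := congrFun (congrFun hA0 1) 1
      rw [hA] at this
      have h2 : (n00 : Quaternion ℝ) = 0 := by simpa using this
      exact Quaternion.coe_injective (h2.trans Quaternion.coe_zero.symm)
    have hq0 : q = 0 := by
      have : Quaternion.normSq q = 0 := by rw [hr] at hr0; rw [h00] at hr0; linarith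
      exact Quaternion.normSq_eq_zero.mp this
    have : M * Mᴴ = 0 := by
      rw [hN, h00, h11, hq0]
      refine Matrix.ext fun i j => ?_
      fin_cases i <;> fin_cases j <;> simp
    exact hNunit.ne_zero this
  · -- r ≠ 0 → invertible
    intro hrne
    have hMB : M * (r⁻¹ • (Mᴴ * A)) = 1 := by
      rw [Matrix.mul_smul, ← mul_assoc, hNA, smul_smul, inv_mul_cancel₀ hrne, one_smul]
    exact isUnit_of_mul_eq_one_findim hMB
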